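/- Let N ∈ ℕ and let a_1,…,a_N be real numbers with Σ_{ν=1}^N a_ν ν² = 1 and Σ_{ν=1}^N a_ν ν^{2m} = 0 for m = 2,…,N. Define A(θ) := 2 Σ_{ν=1}^N a_ν (1 - cos(νθ)). Then A'(θ) > 0 for all θ ∈ (0,π). -/

import Mathlib

open Real Finset

noncomputable def bb (k : ℕ) : ℝ := 2 * ((Nat.factorial (k-1) : ℝ))^2 / (Nat.factorial (2*k) : ℝ)
lemma bb_pos (k : ℕ) : 0 < bb k := by unfold bb; positivity
lemma bb_one : bb 1 = 1 := by norm_num [bb]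
lemma bb_rec (k : ℕ) (hk : 1 ≤ k) :
    (k:ℝ)^2 * bb k = 2*((k:ℝ)+1)*(2*(k:ℝ)+1) * bb (k+1) := by
  unfold bb
  have h1 : (2*(k+1)) = (2*k) + 1 + 1 := by ring
  rw [h1, Nat.factorial_succ, Nat.factorial_succ]
  have h2 : (k+1) - 1 = k := by omega
  rw [h2]
  obtain ⟨j, rfl⟩ : ∃ j, k = j + 1 := ⟨k - 1, by omega⟩
  have h3 : (j + 1) - 1 = j := by omega
  rw [h3, Nat.factorial_succ]
  have hf1 : ((Nat.factorial j : ℝ)) ≠ 0 := by positivity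
  have hf2 : ((Nat.factorial (2*(j+1)) : ℝ)) ≠ 0 := by positivity
  field_simp
  push_cast
  ring

noncomputable def Pp (N : ℕ) (y : ℝ) : ℝ := ∑ m ∈ range N, ((m:ℝ)+1) * bb (m+1) * y^m
noncomputable def Qq (N : ℕ) (y : ℝ) : ℝ := ∑ m ∈ range N, ((m:ℝ)+1) * (m:ℝ) * bb (m+1) * y^(m-1)
noncomputable def Gg (N : ℕ) (θ : ℝ) : ℝ := ∑ m ∈ range N, bb (m+1) * (2 - 2*Real.cos θ)^(m+1)

lemma ode (N : ℕ) (hN : 1 ≤ N) (y : ℝ) :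
    (2 - y) * Pp N y + (4*y - y^2) * Qq N y = 2 - (N:ℝ)^2 * bb N * y^N := by
  induction N, hN using Nat.le_induction with
  | base =>
    unfold Pp Qq
    norm_num [bb_one]
  | succ N hN ih =>
    have hP : Pp (N+1) y = Pp N y + ((N:ℝ)+1) * bb (N+1) * y^N := by
      unfold Pp; rw [Finset.sum_range_succ]
    have hQ : Qq (N+1) y = Qq N y + ((N:ℝ)+1) * (N:ℝ) * bb (N+1) * y^(N-1) := by
      unfold Qq; rw [Finset.sum_range_succ]
    have hy1 : y * y^(N-1) = y^N := by
      rw [← pow_succ']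
      congr 1
      omega
    have hy2 : y^2 * y^(N-1) = y^(N+1) := by
      have : y^2 * y^(N-1) = y * (y * y^(N-1)) := by ring
      rw [this, hy1, ← pow_succ']
    have hy3 : y * y^N = y^(N+1) := (pow_succ' y N).symm
    have hrec := bb_rec N hN
    rw [hP, hQ]
    push_cast
    linear_combination ih - y^N*hrec + 4*((N:ℝ)+1)*(N:ℝ)*bb (N+1)*hy1
      - ((N:ℝ)+1)*(N:ℝ)*bb (N+1)*hy2 - ((N:ℝ)+1)*bb (N+1)*hy3

lemma hasDerivAt_y (θ : ℝ) : HasDerivAt (fun t : ℝ => 2 - 2*Real.cos t) (2*Real.sin θ) θ := by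
  have h := (Real.hasDerivAt_cos θ).const_mul (2:ℝ)
  have h2 := h.const_sub (2:ℝ)
  refine h2.congr_deriv (Eq.symm ?_)
  ring

lemma hasDerivAt_Gg (N : ℕ) (θ : ℝ) :
    HasDerivAt (Gg N) (2*Real.sin θ * Pp N (2 - 2*Real.cos θ)) θ := by
  have hterm : ∀ m ∈ range N, HasDerivAt (fun t : ℝ => bb (m+1) * (2 - 2*Real.cos t)^(m+1))
      (bb (m+1) * ((((m+1 : ℕ)):ℝ) * (2 - 2*Real.cos θ)^((m+1)-1) * (2*Real.sin θ))) θ := by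
    intro m _
    exact ((hasDerivAt_y θ).pow (m+1)).const_mul (bb (m+1))
  have hsum := HasDerivAt.fun_sum hterm
  refine hsum.congr_deriv (Eq.symm ?_)
  unfold Pp
  rw [Finset.mul_sum]
  apply Finset.sum_congr rfl
  intro m _
  simp only [Nat.add_sub_cancel]
  push_cast
  ring

lemma hasDerivAt_Pp (N : ℕ) (y : ℝ) : HasDerivAt (Pp N) (Qq N y) y := by
  have hterm : ∀ m ∈ range N, HasDerivAt (fun x : ℝ => ((m:ℝ)+1) * bb (m+1) * x^m)
      (((m:ℝ)+1) * (m:ℝ) * bb (m+1) * y^(m-1)) y := by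
    intro m _
    have h1 := (hasDerivAt_pow m y).const_mul (((m:ℝ)+1) * bb (m+1))
    refine h1.congr_deriv (Eq.symm ?_)
    ring
  exact HasDerivAt.fun_sum hterm

lemma hasDerivAt_G' (N : ℕ) (hN : 1 ≤ N) (θ : ℝ) :
    HasDerivAt (fun t => 2*Real.sin t * Pp N (2 - 2*Real.cos t))
      (2 - (N:ℝ)^2 * bb N * (2 - 2*Real.cos θ)^N) θ := by
  have hs := (Real.hasDerivAt_sin θ).const_mul (2:ℝ)
  have hc : HasDerivAt (fun t => Pp N (2 - 2*Real.cos t)) (Qq N (2 - 2*Real.cos θ) * (2*Real.sin θ)) θ :=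
    (hasDerivAt_Pp N (2 - 2*Real.cos θ)).comp (h := fun t => 2 - 2*Real.cos t) θ (hasDerivAt_y θ)
  have hmul := hs.mul hc
  refine hmul.congr_deriv (Eq.symm ?_)
  have hode := ode N hN (2 - 2*Real.cos θ)
  have hsc : Real.sin θ ^ 2 = 1 - Real.cos θ ^ 2 := by
    have := Real.sin_sq_add_cos_sq θ
    linarith
  linear_combination (-1)*hode - 4*(Qq N (2-2*Real.cos θ))*hsc

lemma bound_of_deriv (δ : ℝ) (f g F Gd : ℝ → ℝ)
    (hf0 : f 0 = 0) (hg0 : g 0 = 0)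
    (hf : ∀ t, HasDerivAt f (F t) t) (hg : ∀ t, HasDerivAt g (Gd t) t)
    (hb : ∀ t ∈ Set.Icc (0:ℝ) δ, |F t| ≤ Gd t) :
    ∀ t ∈ Set.Icc (0:ℝ) δ, |f t| ≤ g t := by
  intro t ht
  have haux : ∀ (s : ℝ → ℝ) (S : ℝ → ℝ), (∀ u, HasDerivAt s (S u) u) →
      (∀ u ∈ Set.Icc (0:ℝ) δ, 0 ≤ S u) → MonotoneOn s (Set.Icc (0:ℝ) δ) := by
    intro s S hs hS
    apply monotoneOn_of_deriv_nonneg (convex_Icc _ _)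
    · exact fun u _ => (hs u).continuousAt.continuousWithinAt
    · intro u hu
      exact ((hs u).differentiableAt).differentiableWithinAt
    · intro u hu
      rw [(hs u).deriv]
      exact hS u (interior_subset hu)
  have h0 : (0:ℝ) ∈ Set.Icc (0:ℝ) δ := ⟨le_refl 0, le_trans ht.1 ht.2⟩
  have m1 : MonotoneOn (fun u => g u - f u) (Set.Icc (0:ℝ) δ) := by
    apply haux _ (fun u => Gd u - F u) (fun u => (hg u).sub (hf u))
    intro u hu
    have := hb u hu
    have := abs_nonneg (F u)
    have := le_of_abs_le (hb u hu)
    linarith [neg_abs_le (F u)]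
  have m2 : MonotoneOn (fun u => g u + f u) (Set.Icc (0:ℝ) δ) := by
    apply haux _ (fun u => Gd u + F u) (fun u => (hg u).add (hf u))
    intro u hu
    linarith [neg_abs_le (F u), hb u hu]
  have e1 := m1 h0 ht ht.1
  have e2 := m2 h0 ht ht.1
  simp only [hf0, hg0, add_zero, sub_zero] at e1 e2
  rw [abs_le]
  constructor <;> linarith

lemma y_nonneg (t : ℝ) : 0 ≤ 2 - 2*Real.cos t := by
  have := Real.cos_le_one t; linarith

lemma y_le_sq (t : ℝ) : 2 - 2*Real.cos t ≤ t^2 := by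
  have := Real.one_sub_sq_div_two_le_cos (x := t); linarith

lemma Gg_taylor (N : ℕ) (hN : 1 ≤ N) :
    ∀ t ∈ Set.Icc (0:ℝ) 1, |Gg N t - t^2| ≤ (N:ℝ)^2 * bb N * t^(2*N+2) := by
  set K : ℝ := (N:ℝ)^2 * bb N with hK
  have hKpos : 0 < K := by
    have := bb_pos N
    have : (0:ℝ) < (N:ℝ)^2 := by
      have : (1:ℝ) ≤ (N:ℝ) := by exact_mod_cast hN
      nlinarith
    positivity
  have hyb : ∀ t : ℝ, (2 - 2*Real.cos t)^N ≤ t^(2*N) := by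
    intro t
    calc (2 - 2*Real.cos t)^N ≤ (t^2)^N := pow_le_pow_left₀ (y_nonneg t) (y_le_sq t) N
      _ = t^(2*N) := by rw [← pow_mul]
  -- step 1
  have hw1 : ∀ t : ℝ, HasDerivAt (fun u => 2*Real.sin u * Pp N (2 - 2*Real.cos u) - 2*u)
      (-(K * (2 - 2*Real.cos t)^N)) t := by
    intro t
    have h1 := (hasDerivAt_G' N hN t).sub ((hasDerivAt_id t).const_mul (2:ℝ))
    refine h1.congr_deriv (Eq.symm ?_)
    ring
  have hg1 : ∀ t : ℝ, HasDerivAt (fun u : ℝ => K * u^(2*N+1) / (2*(N:ℝ)+1)) (K * t^(2*N)) t := by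
    intro t
    have h1 := ((hasDerivAt_pow (2*N+1) t).const_mul K).div_const (2*(N:ℝ)+1)
    refine h1.congr_deriv (Eq.symm ?_)
    have hne : (2*(N:ℝ)+1) ≠ 0 := by positivity
    field_simp
    push_cast
    try simp only [Nat.add_sub_cancel]
    ring
  have hb1 : ∀ t ∈ Set.Icc (0:ℝ) 1, |(-(K * (2 - 2*Real.cos t)^N))| ≤ K * t^(2*N) := by
    intro t ht
    rw [abs_neg, abs_of_nonneg (mul_nonneg hKpos.le (pow_nonneg (y_nonneg t) N))]
    exact mul_le_mul_of_nonneg_left (hyb t) hKpos.le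
  have hs1 := bound_of_deriv 1 _ _ _ _ (by simp) (by simp) hw1 hg1 hb1
  -- step 2
  have hw2 : ∀ t : ℝ, HasDerivAt (fun u => Gg N u - u^2)
      (2*Real.sin t * Pp N (2 - 2*Real.cos t) - 2*t) t := by
    intro t
    have h1 := (hasDerivAt_Gg N t).sub (hasDerivAt_pow 2 t)
    refine h1.congr_deriv (Eq.symm ?_)
    norm_num
  have hg2 : ∀ t : ℝ, HasDerivAt (fun u : ℝ => K * u^(2*N+2) / ((2*(N:ℝ)+1)*(2*(N:ℝ)+2)))
      (K * t^(2*N+1) / (2*(N:ℝ)+1)) t := by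
    intro t
    have h1 := ((hasDerivAt_pow (2*N+2) t).const_mul K).div_const ((2*(N:ℝ)+1)*(2*(N:ℝ)+2))
    refine h1.congr_deriv (Eq.symm ?_)
    have hne1 : (2*(N:ℝ)+1) ≠ 0 := by positivity
    have hne2 : (2*(N:ℝ)+2) ≠ 0 := by positivity
    field_simp
    push_cast
    try simp only [Nat.add_sub_cancel]
    ring
  have hb2 : ∀ t ∈ Set.Icc (0:ℝ) 1, |2*Real.sin t * Pp N (2 - 2*Real.cos t) - 2*t| ≤ K * t^(2*N+1) / (2*(N:ℝ)+1) :=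
    hs1
  have hs2 := bound_of_deriv 1 _ _ _ _ (by simp [Gg]) (by simp) hw2 hg2 hb2
  intro t ht
  refine (hs2 t ht).trans ?_
  rw [div_le_iff₀ (by positivity)]
  have h1 : (1:ℝ) ≤ (2*(N:ℝ)+1)*(2*(N:ℝ)+2) := by nlinarith [Nat.cast_nonneg (α := ℝ) N]
  nlinarith [pow_nonneg ht.1 (2*N+2), mul_le_mul_of_nonneg_left h1 (mul_nonneg hKpos.le (pow_nonneg ht.1 (2*N+2)))]



noncomputable def cosPoly (K : ℕ) (x : ℝ) : ℝ :=
  ∑ k ∈ range K, (-1)^k * x^(2*k) / (Nat.factorial (2*k) : ℝ)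

lemma exp_pair_sum (K : ℕ) (x : ℝ) :
    ∑ m ∈ range (2*K), (((x:ℂ)*Complex.I)^m + (-((x:ℂ)*Complex.I))^m) / (Nat.factorial m : ℂ)
      = 2 * ∑ k ∈ range K, (-1)^k * (x:ℂ)^(2*k) / (Nat.factorial (2*k) : ℂ) := by
  induction K with
  | zero => simp
  | succ K ih =>
    have h2 : 2*(K+1) = (2*K) + 1 + 1 := by ring
    rw [h2, Finset.sum_range_succ, Finset.sum_range_succ, ih, Finset.sum_range_succ]
    have hodd : Odd (2*K+1) := ⟨K, by ring⟩
    have hO : (-((x:ℂ)*Complex.I))^(2*K+1) = -(((x:ℂ)*Complex.I))^(2*K+1) := hodd.neg_pow _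
    have hev : Even (2*K) := ⟨K, by ring⟩
    have hE : (-((x:ℂ)*Complex.I))^(2*K) = (((x:ℂ)*Complex.I))^(2*K) := hev.neg_pow _
    have hI : ((x:ℂ)*Complex.I)^(2*K) = (-1)^K * (x:ℂ)^(2*K) := by
      rw [mul_pow, pow_mul, pow_mul, Complex.I_sq]
      ring
    rw [hO, hE, hI]
    ring

lemma cos_taylor (K : ℕ) (hK : 1 ≤ K) (x : ℝ) (hx : |x| ≤ 1) :
    |Real.cos x - cosPoly K x| ≤ |x|^(2*K) := by
  have habs : ‖(x:ℂ)*Complex.I‖ = |x| := by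
    simp
  have hx1 : ‖(x:ℂ)*Complex.I‖ ≤ 1 := by rw [habs]; exact hx
  have hx2 : ‖-((x:ℂ)*Complex.I)‖ ≤ 1 := by rwa [norm_neg]
  have hn : 0 < 2*K := by omega
  have hb1 := Complex.exp_bound hx1 hn
  have hb2 := Complex.exp_bound hx2 hn
  set E1 : ℂ := Complex.exp ((x:ℂ)*Complex.I) - ∑ m ∈ range (2*K), ((x:ℂ)*Complex.I)^m / (Nat.factorial m : ℂ) with hE1
  set E2 : ℂ := Complex.exp (-((x:ℂ)*Complex.I)) - ∑ m ∈ range (2*K), (-((x:ℂ)*Complex.I))^m / (Nat.factorial m : ℂ) with hE2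
  set c : ℝ := ((2*K).succ : ℝ) * (((Nat.factorial (2*K)) : ℝ) * ((2*K : ℕ) : ℝ))⁻¹ with hc
  have key : ((Real.cos x - cosPoly K x : ℝ) : ℂ) = (E1 + E2) / 2 := by
    have hps := exp_pair_sum K x
    have hsum : ∑ m ∈ range (2*K), (((x:ℂ)*Complex.I)^m + (-((x:ℂ)*Complex.I))^m) / (Nat.factorial m : ℂ)
        = (∑ m ∈ range (2*K), ((x:ℂ)*Complex.I)^m / (Nat.factorial m : ℂ))
          + ∑ m ∈ range (2*K), (-((x:ℂ)*Complex.I))^m / (Nat.factorial m : ℂ) := by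
      rw [← Finset.sum_add_distrib]
      congr 1; funext m; ring
    rw [hsum] at hps
    have h2c : 2 * Complex.cos (x:ℂ) = Complex.exp ((x:ℂ)*Complex.I) + Complex.exp (-((x:ℂ)*Complex.I)) := by
      have := Complex.two_cos (x:ℂ)
      rw [neg_mul] at this
      exact this
    have hcp : ((cosPoly K x : ℝ) : ℂ) = ∑ k ∈ range K, (-1)^k * (x:ℂ)^(2*k) / (Nat.factorial (2*k) : ℂ) := by
      unfold cosPoly
      push_cast
      norm_num
    rw [Complex.ofReal_sub, Complex.ofReal_cos, hcp, hE1, hE2]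
    field_simp
    linear_combination h2c + hps
  have habs2 : |Real.cos x - cosPoly K x| = ‖(E1 + E2)/2‖ := by
    rw [← key, Complex.norm_real, Real.norm_eq_abs]
  rw [habs2]
  have hcb : |x|^(2*K) * c ≤ |x|^(2*K) * 1 := by
    apply mul_le_mul_of_nonneg_left _ (by positivity)
    rw [hc, mul_inv_le_iff₀ (by positivity), one_mul]
    have h1 : (2*K) ≤ Nat.factorial (2*K) := Nat.self_le_factorial _
    have h1' : ((2*K : ℕ) : ℝ) ≤ ((Nat.factorial (2*K) : ℕ) : ℝ) := by exact_mod_cast h1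
    have hKR : (1:ℝ) ≤ (K:ℝ) := by exact_mod_cast hK
    have h2 : ((2*K).succ : ℝ) = 2*(K:ℝ) + 1 := by push_cast; ring
    have h3 : ((2*K:ℕ) : ℝ) = 2*(K:ℝ) := by push_cast; ring
    rw [h2, h3]
    nlinarith
  calc ‖(E1 + E2)/2‖ ≤ (‖E1‖ + ‖E2‖) / 2 := by
        rw [norm_div, Complex.norm_two]
        gcongr
        exact norm_add_le _ _
    _ ≤ (|x|^(2*K) * c + |x|^(2*K) * c) / 2 := by
        have b1 : ‖E1‖ ≤ |x|^(2*K) * c := by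
          rw [hc]; rw [habs] at hb1; exact hb1
        have b2 : ‖E2‖ ≤ |x|^(2*K) * c := by
          rw [hc]; rw [norm_neg, habs] at hb2; exact hb2
        gcongr
    _ = |x|^(2*K) * c := by ring
    _ ≤ |x|^(2*K) * 1 := hcb
    _ = |x|^(2*K) := by ring


lemma two_cos_mul (a θ : ℝ) : 2 * Real.cos θ * Real.cos a = Real.cos (a + θ) + Real.cos (a - θ) := by
  rw [Real.cos_add, Real.cos_sub]; ring

lemma cos_span (N : ℕ) : ∀ m : ℕ, m ≤ N → ∃ c : ℕ → ℝ,
    (∀ ν, m < ν → c ν = 0) ∧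
    ∀ θ : ℝ, (2 - 2*Real.cos θ)^m = ∑ ν ∈ range (N+1), c ν * Real.cos ((ν:ℝ)*θ) := by
  intro m
  induction m with
  | zero =>
    intro _
    refine ⟨fun ν => if ν = 0 then 1 else 0, ?_, ?_⟩
    · intro ν hν
      have : ν ≠ 0 := by omega
      simp [this]
    · intro θ
      rw [Finset.sum_eq_single 0]
      · simp
      · intro b _ hb; simp [hb]
      · intro h; simp at h
  | succ m ih =>
    intro hm
    obtain ⟨c, hsupp, hrep⟩ := ih (by omega)
    have hcN : c N = 0 := hsupp N (by omega)
    have hcN1 : c (N+1) = 0 := hsupp (N+1) (by omega)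
    set hh : ℕ → ℝ := fun ν => if ν = 1 then 2*c 0 else if 2 ≤ ν then c (ν-1) else 0 with hhh
    refine ⟨fun ν => 2*c ν - c (ν+1) - hh ν, ?_, ?_⟩
    · intro ν hν
      show 2*c ν - c (ν+1) - hh ν = 0
      have h1 : c ν = 0 := hsupp ν (by omega)
      have h2 : c (ν+1) = 0 := hsupp (ν+1) (by omega)
      have h3 : hh ν = 0 := by
        rw [hhh]
        simp only
        split_ifs with hν1 hν2
        · omega
        · exact hsupp (ν-1) (by omega)
        · rfl
      rw [h1, h2, h3]; ring
    · intro θ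
      obtain ⟨N', rfl⟩ : ∃ N', N = N' + 1 := ⟨N - 1, by omega⟩
      have hS := hrep θ
      rw [pow_succ, hS]
      have hh0 : hh 0 = 0 := by simp [hhh]
      have hh1 : hh 1 = 2*c 0 := by simp [hhh]
      have hh2 : ∀ ν : ℕ, hh (ν+2) = c (ν+1) := by
        intro ν
        rw [hhh]
        simp only
        split_ifs with hν1 hν2
        · omega
        · congr 1
        · omega
      have E1 : (∑ ν ∈ range (N'+1+1), c ν * Real.cos ((ν:ℝ)*θ)) * (2 - 2*Real.cos θ)
          = 2 * (∑ ν ∈ range (N'+1+1), c ν * Real.cos ((ν:ℝ)*θ))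
            - (2*(c 0)*Real.cos θ
               + (∑ ν ∈ range (N'+1), c (ν+1) * Real.cos (((ν+2:ℕ):ℝ)*θ)
                  + ∑ ν ∈ range (N'+1), c (ν+1) * Real.cos ((ν:ℝ)*θ))) := by
        have expand : (∑ ν ∈ range (N'+1+1), c ν * Real.cos ((ν:ℝ)*θ)) * (2 - 2*Real.cos θ)
            = 2 * (∑ ν ∈ range (N'+1+1), c ν * Real.cos ((ν:ℝ)*θ))
              - ∑ ν ∈ range (N'+1+1), c ν * (2 * Real.cos θ * Real.cos ((ν:ℝ)*θ)) := by
          rw [Finset.mul_sum, ← Finset.sum_sub_distrib, Finset.sum_mul]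
          apply Finset.sum_congr rfl
          intro ν _
          ring
        rw [expand]
        congr 1
        rw [Finset.sum_range_succ']
        have step : ∀ ν ∈ range (N'+1), c (ν+1) * (2 * Real.cos θ * Real.cos (((ν+1:ℕ):ℝ)*θ))
            = c (ν+1) * Real.cos (((ν+2:ℕ):ℝ)*θ) + c (ν+1) * Real.cos ((ν:ℝ)*θ) := by
          intro ν _
          have : 2 * Real.cos θ * Real.cos (((ν+1:ℕ):ℝ)*θ)
              = Real.cos (((ν+2:ℕ):ℝ)*θ) + Real.cos ((ν:ℝ)*θ) := by
            rw [two_cos_mul (((ν+1:ℕ):ℝ)*θ) θ]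
            congr 2 <;> push_cast <;> ring
          rw [this]; ring
        rw [Finset.sum_congr rfl step, Finset.sum_add_distrib]
        have h00 : c 0 * (2 * Real.cos θ * Real.cos (((0:ℕ):ℝ)*θ)) = 2*(c 0)*Real.cos θ := by
          norm_num
          ring
        rw [h00]
        ring
      rw [E1]
      have E2 : ∑ ν ∈ range (N'+1+1), (2*c ν - c (ν+1) - hh ν) * Real.cos ((ν:ℝ)*θ)
          = 2 * (∑ ν ∈ range (N'+1+1), c ν * Real.cos ((ν:ℝ)*θ))
            - (∑ ν ∈ range (N'+1+1), c (ν+1) * Real.cos ((ν:ℝ)*θ))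
            - ∑ ν ∈ range (N'+1+1), hh ν * Real.cos ((ν:ℝ)*θ) := by
        rw [Finset.mul_sum, ← Finset.sum_sub_distrib, ← Finset.sum_sub_distrib]
        apply Finset.sum_congr rfl
        intro ν _
        ring
      rw [E2]
      have E3 : ∑ ν ∈ range (N'+1+1), hh ν * Real.cos ((ν:ℝ)*θ)
          = 2*(c 0)*Real.cos θ + ∑ ν ∈ range N', c (ν+1) * Real.cos (((ν+2:ℕ):ℝ)*θ) := by
        rw [Finset.sum_range_succ', Finset.sum_range_succ']
        have t1 : ∀ ν ∈ range N', hh (ν+1+1) * Real.cos (((ν+1+1:ℕ):ℝ)*θ)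
            = c (ν+1) * Real.cos (((ν+2:ℕ):ℝ)*θ) := by
          intro ν _
          rw [hh2 ν]
        rw [Finset.sum_congr rfl t1, hh0, hh1]
        norm_num
        ring
      rw [E3]
      have P1 : ∑ ν ∈ range (N'+1), c (ν+1) * Real.cos (((ν+2:ℕ):ℝ)*θ)
          = ∑ ν ∈ range N', c (ν+1) * Real.cos (((ν+2:ℕ):ℝ)*θ) := by
        rw [Finset.sum_range_succ, hcN]
        ring
      have P2 : ∑ ν ∈ range (N'+1+1), c (ν+1) * Real.cos ((ν:ℝ)*θ)
          = ∑ ν ∈ range (N'+1), c (ν+1) * Real.cos ((ν:ℝ)*θ) := by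
        rw [Finset.sum_range_succ, hcN1]
        ring
      rw [P1, P2]
      ring

lemma poly_extract : ∀ (K : ℕ) (c : ℕ → ℝ) (C δ : ℝ), 0 < δ → δ ≤ 1 → 0 ≤ C →
    (∀ θ : ℝ, θ ∈ Set.Ioo (0:ℝ) δ → |∑ k ∈ range K, c k * θ^(2*k)| ≤ C * θ^(2*K)) →
    ∀ k, k < K → c k = 0 := by
  intro K
  induction K with
  | zero => intro c C δ _ _ _ _ k hk; omega
  | succ K ih =>
    intro c C δ hδ hδ1 hC hb
    have hfact : ∀ θ : ℝ, ∑ k ∈ range (K+1), c k * θ^(2*k)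
        = c 0 + θ^2 * ∑ k ∈ range K, c (k+1) * θ^(2*k) := by
      intro θ
      rw [Finset.sum_range_succ']
      have hcg : ∀ k ∈ range K, c (k+1) * θ^(2*(k+1)) = θ^2 * (c (k+1) * θ^(2*k)) := by
        intro k _
        rw [show 2*(k+1) = 2 + 2*k by ring, pow_add]
        ring
      rw [Finset.sum_congr rfl hcg, ← Finset.mul_sum]
      simp only [mul_zero, pow_zero, mul_one]
      ring
    set M : ℝ := ∑ k ∈ range K, |c (k+1)| with hM
    have hMnn : 0 ≤ M := Finset.sum_nonneg (fun k _ => abs_nonneg _)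
    have hc0b : ∀ θ : ℝ, θ ∈ Set.Ioo (0:ℝ) δ → |c 0| ≤ (C + M) * θ^2 := by
      intro θ hθ
      have h1 := hb θ hθ
      have hθ0 : 0 < θ := hθ.1
      have hθ1 : θ ≤ 1 := le_of_lt (lt_of_lt_of_le hθ.2 hδ1)
      have hS : |∑ k ∈ range K, c (k+1) * θ^(2*k)| ≤ M := by
        calc |∑ k ∈ range K, c (k+1) * θ^(2*k)| ≤ ∑ k ∈ range K, |c (k+1) * θ^(2*k)| :=
              Finset.abs_sum_le_sum_abs _ _
          _ ≤ ∑ k ∈ range K, |c (k+1)| := by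
              apply Finset.sum_le_sum
              intro k _
              rw [abs_mul]
              have : |θ^(2*k)| ≤ 1 := by
                rw [abs_of_nonneg (pow_nonneg hθ0.le _)]
                exact pow_le_one₀ hθ0.le hθ1
              nlinarith [abs_nonneg (c (k+1))]
          _ = M := rfl
      have hc0 : c 0 = (∑ k ∈ range (K+1), c k * θ^(2*k)) - θ^2 * ∑ k ∈ range K, c (k+1) * θ^(2*k) := by
        rw [hfact θ]; ring
      have hpow : θ^(2*(K+1)) ≤ θ^2 := by
        rw [show 2*(K+1) = 2*K + 2 by ring, pow_add]
        have h1 : θ^(2*K) ≤ 1 := pow_le_one₀ hθ0.le hθ1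
        nlinarith [pow_nonneg hθ0.le 2, pow_nonneg hθ0.le (2*K)]
      calc |c 0| ≤ |∑ k ∈ range (K+1), c k * θ^(2*k)| + θ^2 * |∑ k ∈ range K, c (k+1) * θ^(2*k)| := by
            rw [hc0]
            refine (abs_sub _ _).trans ?_
            rw [abs_mul, abs_of_nonneg (pow_nonneg hθ0.le 2)]
        _ ≤ C * θ^(2*(K+1)) + θ^2 * M := by
            gcongr
        _ ≤ (C + M) * θ^2 := by nlinarith [pow_nonneg hθ0.le 2]
    have hc00 : c 0 = 0 := by
      have htend : Filter.Tendsto (fun θ : ℝ => (C + M) * θ^2) (nhdsWithin 0 (Set.Ioi 0)) (nhds 0) := by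
        have hcont : Continuous (fun θ : ℝ => (C + M) * θ^2) := continuous_const.mul (continuous_pow 2)
        have h2 := hcont.tendsto 0
        have h0 : (C + M) * (0:ℝ)^2 = 0 := by norm_num
        rw [h0] at h2
        exact h2.mono_left nhdsWithin_le_nhds
      have hev : ∀ᶠ θ in nhdsWithin 0 (Set.Ioi 0), |c 0| ≤ (C + M) * θ^2 := by
        filter_upwards [Ioo_mem_nhdsGT_of_mem (Set.mem_Ico.mpr ⟨le_refl 0, hδ⟩)] with θ hθ
        exact hc0b θ hθ
      have : |c 0| ≤ 0 := ge_of_tendsto htend hev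
      have := abs_nonneg (c 0)
      have : |c 0| = 0 := le_antisymm ‹|c 0| ≤ 0› ‹0 ≤ |c 0|›
      exact abs_eq_zero.mp this
    have hrest : ∀ k, k < K → c (k+1) = 0 := by
      apply ih (fun k => c (k+1)) C δ hδ hδ1 hC
      intro θ hθ
      have h1 := hb θ hθ
      rw [hfact θ, hc00, zero_add] at h1
      have hθ0 : 0 < θ := hθ.1
      rw [abs_mul, abs_of_nonneg (pow_nonneg hθ0.le 2)] at h1
      rw [show 2*(K+1) = 2 + 2*K by ring, pow_add] at h1
      rw [show C * (θ^2 * θ^(2*K)) = θ^2 * (C * θ^(2*K)) by ring] at h1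
      exact le_of_mul_le_mul_left h1 (by positivity : (0:ℝ) < θ^2)
    intro k hk
    cases k with
    | zero => exact hc00
    | succ k => exact hrest k (by omega)

lemma vand_zero (n : ℕ) (d : Fin n → ℝ)
    (h : ∀ k : Fin n, ∑ ν : Fin n, d ν * ((((ν:ℕ):ℝ))^2)^(k:ℕ) = 0) : ∀ ν, d ν = 0 := by
  have hinj : Function.Injective (fun ν : Fin n => (((ν:ℕ):ℝ))^2) := by
    intro i j hij
    simp only at hij
    have hi : (0:ℝ) ≤ ((i:ℕ):ℝ) := Nat.cast_nonneg _
    have hj : (0:ℝ) ≤ ((j:ℕ):ℝ) := Nat.cast_nonneg _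
    have : ((i:ℕ):ℝ) = ((j:ℕ):ℝ) := by nlinarith [sq_abs ((i:ℕ):ℝ)]
    have : (i:ℕ) = (j:ℕ) := Nat.cast_injective this
    exact Fin.ext this
  have := Matrix.eq_zero_of_forall_pow_sum_mul_pow_eq_zero hinj (v := d) (by
    intro k
    exact h k)
  intro ν
  exact congrFun this ν


theorem symbol_deriv_pos (N : ℕ) (hN : 0 < N) (a : Fin N → ℝ)
    (h1 : ∑ ν : Fin N, a ν * ((ν : ℕ) + 1 : ℝ) ^ 2 = 1)
    (hm : ∀ m : ℕ, 2 ≤ m → m ≤ N → ∑ ν : Fin N, a ν * ((ν : ℕ) + 1 : ℝ) ^ (2 * m) = 0)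
    (A : ℝ → ℝ)
    (hA : ∀ θ : ℝ, A θ = 2 * ∑ ν : Fin N, a ν * (1 - Real.cos (((ν : ℕ) + 1) * θ)))
    (θ : ℝ) (hθ : θ ∈ Set.Ioo 0 π) :
    0 < deriv A θ := by
  classical
  obtain ⟨hθ0, hθπ⟩ := hθ
  have hNR : (1:ℝ) ≤ (N:ℝ) := by exact_mod_cast hN
  -- moments of a
  have hμ : ∀ k : ℕ, 1 ≤ k → k ≤ N →
      (∑ ν : Fin N, a ν * ((ν : ℕ) + 1 : ℝ) ^ (2*k)) = if k = 1 then 1 else 0 := by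
    intro k hk1 hkN
    rcases eq_or_lt_of_le hk1 with h|h
    · rw [← h]
      norm_num
      exact h1
    · rw [if_neg (by omega)]
      exact hm k (by omega) hkN
  -- the small interval
  set δ : ℝ := 1/((N:ℝ)+1) with hδdef
  have hδ0 : 0 < δ := by rw [hδdef]; positivity
  have hδ1 : δ ≤ 1 := by
    rw [hδdef, div_le_one (by linarith)]
    linarith
  have hfreq : ∀ t : ℝ, t ∈ Set.Ioo (0:ℝ) δ → ∀ j : ℕ, j ≤ N → |(j:ℝ)*t| ≤ 1 := by
    intro t ht j hj
    rw [abs_of_nonneg (mul_nonneg (Nat.cast_nonneg j) ht.1.le)]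
    have hjN : (j:ℝ) ≤ (N:ℝ) := by exact_mod_cast hj
    have h2 : (j:ℝ)*t ≤ (N:ℝ)*δ := by
      apply mul_le_mul hjN ht.2.le ht.1.le (Nat.cast_nonneg N)
    refine h2.trans ?_
    rw [hδdef]
    rw [mul_one_div, div_le_one (by linarith)]
    linarith
  -- Taylor bound for A
  set CA : ℝ := 2 * ∑ ν : Fin N, |a ν| * ((ν : ℕ) + 1 : ℝ)^(2*N+2) with hCA
  have hCAnn : 0 ≤ CA := by
    rw [hCA]
    apply mul_nonneg (by norm_num)
    apply Finset.sum_nonneg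
    intro ν _
    positivity
  have hAbound : ∀ t ∈ Set.Ioo (0:ℝ) δ, |A t - t^2| ≤ CA * t^(2*N+2) := by
    intro t ht
    have hexp : ∀ x : ℝ, 1 - cosPoly (N+1) x
        = ∑ k ∈ range N, (-1)^k * x^(2*(k+1)) / (Nat.factorial (2*(k+1)) : ℝ) := by
      intro x
      unfold cosPoly
      rw [Finset.sum_range_succ']
      have h0 : (-1:ℝ)^(0:ℕ) * x^(2*0) / (Nat.factorial (2*0) : ℝ) = 1 := by norm_num
      rw [h0]
      rw [show ∀ S : ℝ, 1 - (S + 1) = -S by intro S; ring]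
      rw [← Finset.sum_neg_distrib]
      apply Finset.sum_congr rfl
      intro k _
      rw [pow_succ]
      ring
    have hmain : ∑ ν : Fin N, a ν * (1 - cosPoly (N+1) ((((ν:ℕ):ℝ)+1)*t)) = t^2/2 := by
      have hstep : ∀ ν : Fin N, a ν * (1 - cosPoly (N+1) ((((ν:ℕ):ℝ)+1)*t))
          = ∑ k ∈ range N, (-1)^k * (((ν:ℕ):ℝ)+1)^(2*(k+1)) * t^(2*(k+1)) / (Nat.factorial (2*(k+1)) : ℝ) * a ν := by
        intro ν
        rw [hexp]
        rw [Finset.mul_sum]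
        apply Finset.sum_congr rfl
        intro k _
        rw [mul_pow]
        ring
      rw [Finset.sum_congr rfl (fun ν _ => hstep ν)]
      rw [Finset.sum_comm]
      have hinner : ∀ k ∈ range N,
          (∑ ν : Fin N, (-1)^k * (((ν:ℕ):ℝ)+1)^(2*(k+1)) * t^(2*(k+1)) / (Nat.factorial (2*(k+1)) : ℝ) * a ν)
          = (-1)^k * t^(2*(k+1)) / (Nat.factorial (2*(k+1)) : ℝ) * (if k = 0 then 1 else 0) := by
        intro k hk
        rw [Finset.mem_range] at hk
        have hmom := hμ (k+1) (by omega) (by omega)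
        have : (∑ ν : Fin N, (-1)^k * (((ν:ℕ):ℝ)+1)^(2*(k+1)) * t^(2*(k+1)) / (Nat.factorial (2*(k+1)) : ℝ) * a ν)
            = (-1)^k * t^(2*(k+1)) / (Nat.factorial (2*(k+1)) : ℝ) * (∑ ν : Fin N, a ν * (((ν:ℕ):ℝ)+1)^(2*(k+1))) := by
          rw [Finset.mul_sum]
          apply Finset.sum_congr rfl
          intro ν _
          ring
        rw [this, hmom]
        congr 1
        simp only [Nat.add_eq_right]
      rw [Finset.sum_congr rfl hinner]
      rw [Finset.sum_eq_single 0]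
      · norm_num [Nat.factorial]
      · intro k _ hk
        rw [if_neg hk]
        ring
      · intro h
        rw [Finset.mem_range] at h
        omega
    -- remainder
    have hAt : A t - t^2 = 2 * ∑ ν : Fin N, a ν * (cosPoly (N+1) ((((ν:ℕ):ℝ)+1)*t) - Real.cos ((((ν:ℕ):ℝ)+1)*t)) := by
      rw [hA t]
      have hsplit : ∀ ν : Fin N, a ν * (1 - Real.cos ((((ν:ℕ):ℝ)+1)*t))
          = a ν * (1 - cosPoly (N+1) ((((ν:ℕ):ℝ)+1)*t))
            + a ν * (cosPoly (N+1) ((((ν:ℕ):ℝ)+1)*t) - Real.cos ((((ν:ℕ):ℝ)+1)*t)) := by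
        intro ν; ring
      rw [Finset.sum_congr rfl (fun ν _ => hsplit ν), Finset.sum_add_distrib, hmain]
      ring
    rw [hAt]
    have hbd : ∀ ν : Fin N, |a ν * (cosPoly (N+1) ((((ν:ℕ):ℝ)+1)*t) - Real.cos ((((ν:ℕ):ℝ)+1)*t))|
        ≤ |a ν| * ((ν : ℕ) + 1 : ℝ)^(2*N+2) * t^(2*N+2) := by
      intro ν
      rw [abs_mul]
      have hx : |(((ν:ℕ):ℝ)+1)*t| ≤ 1 := by
        have := hfreq t ht ((ν:ℕ)+1) (by omega)
        push_cast at this ⊢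
        convert this using 3
      have hct := cos_taylor (N+1) (by omega) ((((ν:ℕ):ℝ)+1)*t) hx
      rw [abs_sub_comm] at hct
      have h2 : |(((ν:ℕ):ℝ)+1)*t|^(2*(N+1)) = (((ν:ℕ):ℝ)+1)^(2*N+2) * t^(2*N+2) := by
        rw [abs_mul, abs_of_nonneg (by positivity : (0:ℝ) ≤ ((ν:ℕ):ℝ)+1), abs_of_nonneg ht.1.le,
          mul_pow]
        congr 2 <;> omega
      rw [h2] at hct
      calc |a ν| * |cosPoly (N+1) ((((ν:ℕ):ℝ)+1)*t) - Real.cos ((((ν:ℕ):ℝ)+1)*t)|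
          ≤ |a ν| * ((((ν:ℕ):ℝ)+1)^(2*N+2) * t^(2*N+2)) := by
            apply mul_le_mul_of_nonneg_left hct (abs_nonneg _)
        _ = |a ν| * ((ν : ℕ) + 1 : ℝ)^(2*N+2) * t^(2*N+2) := by ring
    calc |2 * ∑ ν : Fin N, a ν * (cosPoly (N+1) ((((ν:ℕ):ℝ)+1)*t) - Real.cos ((((ν:ℕ):ℝ)+1)*t))|
        = 2 * |∑ ν : Fin N, a ν * (cosPoly (N+1) ((((ν:ℕ):ℝ)+1)*t) - Real.cos ((((ν:ℕ):ℝ)+1)*t))| := by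
          rw [abs_mul]; norm_num
      _ ≤ 2 * ∑ ν : Fin N, |a ν * (cosPoly (N+1) ((((ν:ℕ):ℝ)+1)*t) - Real.cos ((((ν:ℕ):ℝ)+1)*t))| := by
          have := Finset.abs_sum_le_sum_abs
            (fun ν : Fin N => a ν * (cosPoly (N+1) ((((ν:ℕ):ℝ)+1)*t) - Real.cos ((((ν:ℕ):ℝ)+1)*t))) Finset.univ
          linarith
      _ ≤ 2 * ∑ ν : Fin N, |a ν| * ((ν : ℕ) + 1 : ℝ)^(2*N+2) * t^(2*N+2) := by
          have := Finset.sum_le_sum (fun ν (_ : ν ∈ Finset.univ) => hbd ν)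
          linarith
      _ = CA * t^(2*N+2) := by
          rw [hCA]
          have hsm : ∑ ν : Fin N, |a ν| * (((ν:ℕ):ℝ)+1)^(2*N+2) * t^(2*N+2)
              = (∑ ν : Fin N, |a ν| * (((ν:ℕ):ℝ)+1)^(2*N+2)) * t^(2*N+2) := (Finset.sum_mul _ _ _).symm
          rw [hsm]
          ring
  -- G in cosine span
  have hspan : ∀ m : ℕ, m ≤ N → ∃ c : ℕ → ℝ,
      ∀ t : ℝ, (2 - 2*Real.cos t)^m = ∑ ν ∈ range (N+1), c ν * Real.cos ((ν:ℝ)*t) :=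
    fun m hm' => (cos_span N m hm').imp (fun c hc => hc.2)
  choose cf hcrep using hspan
  set cf' : ℕ → ℕ → ℝ := fun m ν => if h : m ≤ N then cf m h ν else 0 with hcf'
  set cG : ℕ → ℝ := fun ν => ∑ m ∈ range N, bb (m+1) * cf' (m+1) ν with hcG
  have hGrep : ∀ t : ℝ, Gg N t = ∑ ν ∈ range (N+1), cG ν * Real.cos ((ν:ℝ)*t) := by
    intro t
    unfold Gg
    have hterm : ∀ m ∈ range N, bb (m+1) * (2-2*Real.cos t)^(m+1)
        = ∑ ν ∈ range (N+1), bb (m+1) * (cf' (m+1) ν * Real.cos ((ν:ℝ)*t)) := by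
      intro m hmm
      rw [Finset.mem_range] at hmm
      have hle : m+1 ≤ N := by omega
      have hr := hcrep (m+1) hle t
      have hcfeq : ∀ ν, cf' (m+1) ν = cf (m+1) hle ν := by
        intro ν
        rw [hcf']
        simp only [dif_pos hle]
      rw [hr, Finset.mul_sum]
      apply Finset.sum_congr rfl
      intro ν _
      rw [hcfeq ν]
    rw [Finset.sum_congr rfl hterm, Finset.sum_comm]
    apply Finset.sum_congr rfl
    intro ν _
    rw [hcG]
    simp only
    rw [Finset.sum_mul]
    apply Finset.sum_congr rfl
    intro m _
    ring
  -- A in cosine span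
  set aa : ℕ → ℝ := fun ν => if h : ν < N then a ⟨ν, h⟩ else 0 with haa
  have haaeq : ∀ ν : Fin N, a ν = aa (ν:ℕ) := by
    intro ν
    rw [haa]
    simp only [dif_pos ν.isLt, Fin.eta]
  set cA : ℕ → ℝ := fun ν => if ν = 0 then 2*(∑ μ ∈ range N, aa μ) else -2 * aa (ν-1) with hcAdef
  have hArep : ∀ t : ℝ, A t = ∑ ν ∈ range (N+1), cA ν * Real.cos ((ν:ℝ)*t) := by
    intro t
    rw [hA t, Finset.sum_range_succ']
    have hR1 : ∀ ν ∈ range N, cA (ν+1) * Real.cos (((ν+1:ℕ):ℝ)*t)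
        = -2 * aa ν * Real.cos ((((ν:ℕ):ℝ)+1)*t) := by
      intro ν _
      have h1 : cA (ν+1) = -2 * aa ν := by
        rw [hcAdef]
        simp only [Nat.add_eq_zero, one_ne_zero, and_false, if_false, Nat.add_sub_cancel]
      rw [h1]
      congr 2
      push_cast
      ring
    rw [Finset.sum_congr rfl hR1]
    have hR0 : cA 0 * Real.cos (((0:ℕ):ℝ)*t) = 2*(∑ μ ∈ range N, aa μ) := by
      rw [hcAdef]
      norm_num
    rw [hR0]
    have hL : ∑ ν : Fin N, a ν * (1 - Real.cos ((((ν:ℕ):ℝ)+1)*t))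
        = ∑ ν ∈ range N, aa ν * (1 - Real.cos ((((ν:ℕ):ℝ)+1)*t)) := by
      rw [Finset.sum_congr rfl (fun ν _ => by rw [haaeq ν])]
      exact Fin.sum_univ_eq_sum_range (fun ν => aa ν * (1 - Real.cos ((((ν:ℕ):ℝ)+1)*t))) N
    rw [hL]
    rw [Finset.mul_sum, Finset.mul_sum, ← Finset.sum_add_distrib]
    apply Finset.sum_congr rfl
    intro ν _
    ring
  -- difference
  set K2 : ℝ := (N:ℝ)^2 * bb N with hK2
  have hK2nn : 0 ≤ K2 := by
    rw [hK2]
    have := bb_pos N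
    positivity
  set d : ℕ → ℝ := fun ν => cA ν - cG ν with hd
  have hDrep : ∀ t : ℝ, A t - Gg N t = ∑ ν ∈ range (N+1), d ν * Real.cos ((ν:ℝ)*t) := by
    intro t
    rw [hArep t, hGrep t, ← Finset.sum_sub_distrib]
    apply Finset.sum_congr rfl
    intro ν _
    rw [hd]
    ring
  have hDbound : ∀ t ∈ Set.Ioo (0:ℝ) δ,
      |∑ ν ∈ range (N+1), d ν * Real.cos ((ν:ℝ)*t)| ≤ (CA + K2) * t^(2*N+2) := by
    intro t ht
    rw [← hDrep t]
    have hb1 := hAbound t ht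
    have hb2 := Gg_taylor N hN t ⟨ht.1.le, le_trans ht.2.le hδ1⟩
    rw [← hK2] at hb2
    have h3 : |A t - Gg N t| ≤ |A t - t^2| + |Gg N t - t^2| := by
      have := abs_sub (A t - t^2) (Gg N t - t^2)
      calc |A t - Gg N t| = |(A t - t^2) - (Gg N t - t^2)| := by ring_nf
        _ ≤ |A t - t^2| + |Gg N t - t^2| := abs_sub _ _
    refine h3.trans ?_
    have heq : (CA + K2) * t^(2*N+2) = CA * t^(2*N+2) + K2 * t^(2*N+2) := by ring
    rw [heq]
    exact add_le_add hb1 hb2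
  -- extract moments of d
  have hmomd : ∀ k : ℕ, k < N+1 → (∑ ν ∈ range (N+1), d ν * ((ν:ℕ):ℝ)^(2*k)) = 0 := by
    set e : ℕ → ℝ := fun k => (-1)^k * (∑ ν ∈ range (N+1), d ν * ((ν:ℕ):ℝ)^(2*k)) / (Nat.factorial (2*k) : ℝ) with he
    set CE : ℝ := (CA + K2) + ∑ ν ∈ range (N+1), |d ν| * ((ν:ℕ):ℝ)^(2*N+2) with hCE
    have hCEnn : 0 ≤ CE := by
      rw [hCE]
      have h2 : 0 ≤ ∑ ν ∈ range (N+1), |d ν| * ((ν:ℕ):ℝ)^(2*N+2) := by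
        apply Finset.sum_nonneg
        intro ν _
        positivity
      linarith
    have hpe : ∀ t : ℝ, t ∈ Set.Ioo (0:ℝ) δ → |∑ k ∈ range (N+1), e k * t^(2*k)| ≤ CE * t^(2*(N+1)) := by
      intro t ht
      have hswap : ∑ k ∈ range (N+1), e k * t^(2*k)
          = ∑ ν ∈ range (N+1), d ν * cosPoly (N+1) (((ν:ℕ):ℝ)*t) := by
        have hL : ∀ k ∈ range (N+1), e k * t^(2*k)
            = ∑ ν ∈ range (N+1), d ν * ((-1)^k * (((ν:ℕ):ℝ))^(2*k) * t^(2*k) / (Nat.factorial (2*k) : ℝ)) := by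
          intro k _
          rw [he]
          simp only
          rw [show (-1:ℝ)^k * (∑ ν ∈ range (N+1), d ν * ((ν:ℕ):ℝ)^(2*k)) / (Nat.factorial (2*k) : ℝ) * t^(2*k)
              = (∑ ν ∈ range (N+1), d ν * ((ν:ℕ):ℝ)^(2*k)) * ((-1)^k * t^(2*k) / (Nat.factorial (2*k) : ℝ)) from by ring]
          rw [Finset.sum_mul]
          apply Finset.sum_congr rfl
          intro ν _
          ring
        rw [Finset.sum_congr rfl hL, Finset.sum_comm]
        apply Finset.sum_congr rfl
        intro ν _
        unfold cosPoly
        rw [Finset.mul_sum]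
        apply Finset.sum_congr rfl
        intro k _
        rw [mul_pow]
        ring
      rw [hswap]
      have hsplit : ∀ ν ∈ range (N+1), d ν * cosPoly (N+1) (((ν:ℕ):ℝ)*t)
          = d ν * Real.cos (((ν:ℕ):ℝ)*t) + d ν * (cosPoly (N+1) (((ν:ℕ):ℝ)*t) - Real.cos (((ν:ℕ):ℝ)*t)) := by
        intro ν _
        ring
      rw [Finset.sum_congr rfl hsplit, Finset.sum_add_distrib]
      have hrem : |∑ ν ∈ range (N+1), d ν * (cosPoly (N+1) (((ν:ℕ):ℝ)*t) - Real.cos (((ν:ℕ):ℝ)*t))|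
          ≤ (∑ ν ∈ range (N+1), |d ν| * ((ν:ℕ):ℝ)^(2*N+2)) * t^(2*N+2) := by
        refine (Finset.abs_sum_le_sum_abs _ _).trans ?_
        rw [Finset.sum_mul]
        apply Finset.sum_le_sum
        intro ν hν
        rw [Finset.mem_range] at hν
        rw [abs_mul]
        have hx : |((ν:ℕ):ℝ)*t| ≤ 1 := hfreq t ht ν (by omega)
        have hct := cos_taylor (N+1) (by omega) (((ν:ℕ):ℝ)*t) hx
        rw [abs_sub_comm] at hct
        have h2 : |((ν:ℕ):ℝ)*t|^(2*(N+1)) = ((ν:ℕ):ℝ)^(2*N+2) * t^(2*N+2) := by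
          rw [abs_mul, abs_of_nonneg (Nat.cast_nonneg (α := ℝ) ν), abs_of_nonneg ht.1.le, mul_pow]
          congr 2 <;> omega
        rw [h2] at hct
        calc |d ν| * |cosPoly (N+1) (((ν:ℕ):ℝ)*t) - Real.cos (((ν:ℕ):ℝ)*t)|
            ≤ |d ν| * (((ν:ℕ):ℝ)^(2*N+2) * t^(2*N+2)) := mul_le_mul_of_nonneg_left hct (abs_nonneg _)
          _ = |d ν| * ((ν:ℕ):ℝ)^(2*N+2) * t^(2*N+2) := by ring
      have htD := hDbound t ht
      have h2N : t^(2*(N+1)) = t^(2*N+2) := by ring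
      rw [h2N, hCE, add_mul]
      calc |(∑ ν ∈ range (N+1), d ν * Real.cos (((ν:ℕ):ℝ)*t))
            + ∑ ν ∈ range (N+1), d ν * (cosPoly (N+1) (((ν:ℕ):ℝ)*t) - Real.cos (((ν:ℕ):ℝ)*t))|
          ≤ |∑ ν ∈ range (N+1), d ν * Real.cos (((ν:ℕ):ℝ)*t)|
            + |∑ ν ∈ range (N+1), d ν * (cosPoly (N+1) (((ν:ℕ):ℝ)*t) - Real.cos (((ν:ℕ):ℝ)*t))| :=
            abs_add_le _ _
        _ ≤ (CA + K2) * t^(2*N+2) + (∑ ν ∈ range (N+1), |d ν| * ((ν:ℕ):ℝ)^(2*N+2)) * t^(2*N+2) :=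
            add_le_add htD hrem
    have hext := poly_extract (N+1) e CE δ hδ0 hδ1 hCEnn hpe
    intro k hk
    have hek := hext k hk
    rw [he] at hek
    simp only at hek
    rw [div_eq_zero_iff] at hek
    rcases hek with hek | hek
    · rcases mul_eq_zero.mp hek with h2 | h2
      · exfalso
        have : ((-1:ℝ))^k ≠ 0 := pow_ne_zero k (by norm_num)
        exact this h2
      · exact h2
    · exfalso
      have : (Nat.factorial (2*k) : ℝ) ≠ 0 := by positivity
      exact this hek
  -- Vandermonde: d = 0
  have hdzero : ∀ ν : ℕ, ν < N+1 → d ν = 0 := by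
    have hv := vand_zero (N+1) (fun ν : Fin (N+1) => d (ν:ℕ)) (by
      intro k
      have hk := hmomd (k:ℕ) k.isLt
      rw [← hk]
      rw [← Fin.sum_univ_eq_sum_range (fun ν => d ν * ((ν:ℕ):ℝ)^(2*(k:ℕ))) (N+1)]
      apply Finset.sum_congr rfl
      intro ν _
      rw [← pow_mul])
    intro ν hν
    exact hv ⟨ν, hν⟩
  -- A = Gg N
  have hAG : A = Gg N := by
    funext t
    have h1 := hDrep t
    have hz : ∑ ν ∈ range (N+1), d ν * Real.cos (((ν:ℕ):ℝ)*t) = 0 := by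
      apply Finset.sum_eq_zero
      intro ν hν
      rw [hdzero ν (Finset.mem_range.mp hν)]
      ring
    rw [hz] at h1
    linarith
  rw [hAG, (hasDerivAt_Gg N θ).deriv]
  have hsin := Real.sin_pos_of_pos_of_lt_pi hθ0 hθπ
  have hPp : 1 ≤ Pp N (2 - 2*Real.cos θ) := by
    unfold Pp
    have h0 : (0:ℕ) ∈ range N := Finset.mem_range.mpr hN
    have hfirst : (((0:ℕ):ℝ)+1) * bb (0+1) * (2 - 2*Real.cos θ)^(0:ℕ) = 1 := by
      rw [bb_one]
      norm_num
    calc (1:ℝ) = (((0:ℕ):ℝ)+1) * bb (0+1) * (2 - 2*Real.cos θ)^(0:ℕ) := hfirst.symm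
      _ ≤ ∑ m ∈ range N, (((m:ℕ):ℝ)+1) * bb (m+1) * (2 - 2*Real.cos θ)^m := by
          apply Finset.single_le_sum (f := fun m => (((m:ℕ):ℝ)+1) * bb (m+1) * (2 - 2*Real.cos θ)^m) _ h0
          intro m _
          have := bb_pos (m+1)
          have := y_nonneg θ
          positivity
  nlinarith [hsin, hPp]
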